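/- For all constants c_1 > 1 and c_2 ∈ (1, ∞) there exists c_3 < ∞, depending only on c_1 and c_2, with the following property. Let m, q_1 ≥ 1 and n_1, …, n_m ≥ 1 be integers, let Z_i ∈ ℝ^{n_i × q_1} for i = 1, …, m, set n = Σ_i n_i and n̄ = n/m, and suppose (i) n̄/q_1 ≥ c_1 and (ii) c_2^{-1} ≤ γ_min(Z_iᵀZ_i) ≤ γ_max(Z_iᵀZ_i) ≤ c_2 for every i. Let Ψ_1 ∈ ℝ^{q_1×q_1} be symmetric positive semi-definite and ψ_r > 0, and set Σ(ψ) = bdiag(Z_1Ψ_1Z_1ᵀ, …, Z_mΨ_mZ_mᵀ)|_{Ψ_i=Ψ_1} + ψ_r I_n, i.e., the block-diagonal matrix with blocks Z_iΨ_1Z_iᵀ plus ψ_r I_n. For a symmetric V_1 ∈ ℝ^{q_1×q_1} and v_r ∈ ℝ, not both zero, set Σ(v) = bdiag(Z_1V_1Z_1ᵀ, …, Z_mV_1Z_mᵀ) + v_r I_n and, when ‖Σ(ψ)^{-1/2}Σ(v)Σ(ψ)^{-1/2}‖_F ≠ 0, a(v,ψ) = ‖Σ(ψ)^{-1/2}Σ(v)Σ(ψ)^{-1/2}‖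 / ‖Σ(ψ)^{-1/2}Σ(v)Σ(ψ)^{-1/2}‖_F. Then for every such (V_1, v_r), a(v,ψ) ≤ c_3 · m^{-1/2} · (1 + ‖vech(Ψ_1)‖/ψ_r), where vech(Ψ_1) is the vector of lower-triangular entries (including the diagonal) of Ψ_1 and ‖·‖ its Euclidean norm. -/

import Mathlib

open Matrix

open Classical in
/-- The positive semidefinite square root of a matrix (junk value `0` off the
positive semidefinite matrices). -/
noncomputable def msqrt {ι : Type*} [Fintype ι] [DecidableEq ι] (M : Matrix ι ι ℝ) :
    Matrix ι ι ℝ :=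
  if h : M.PosSemidef then
    (h.1.eigenvectorUnitary : Matrix ι ι ℝ) *
      Matrix.diagonal (fun i => Real.sqrt (h.1.eigenvalues i)) *
      (star h.1.eigenvectorUnitary : Matrix ι ι ℝ)
  else 0

/-- The spectral norm of a real square matrix. -/
noncomputable def specNorm {ι : Type*} [Fintype ι] [DecidableEq ι]
    (M : Matrix ι ι ℝ) : ℝ :=
  ‖Matrix.toEuclideanCLM (𝕜 := ℝ) M‖

/-- The Frobenius norm of a real matrix. -/
noncomputable def frobNorm {ι : Type*} [Fintype ι] (M : Matrix ι ι ℝ) : ℝ :=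
  Real.sqrt (∑ i, ∑ j, (M i j) ^ 2)

/-- The block-diagonal covariance matrix `bdiag(Z₁ V₁ Z₁ᵀ, …, Z_m V₁ Z_mᵀ) + v_r I_n`
of the independent-cluster model. -/
noncomputable def SigmaClust {m q1 : ℕ} (nn : Fin m → ℕ)
    (Z : ∀ i : Fin m, Matrix (Fin (nn i)) (Fin q1) ℝ)
    (V1 : Matrix (Fin q1) (Fin q1) ℝ) (vr : ℝ) :
    Matrix (Σ i : Fin m, Fin (nn i)) (Σ i : Fin m, Fin (nn i)) ℝ :=
  Matrix.blockDiagonal' (fun i => Z i * V1 * (Z i)ᵀ) + vr • 1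

/-- The Euclidean norm of the half-vectorization of a `q₁ × q₁` matrix (its
lower-triangular entries, including the diagonal). -/
noncomputable def vechNorm {q1 : ℕ} (M : Matrix (Fin q1) (Fin q1) ℝ) : ℝ :=
  Real.sqrt (∑ k : Fin q1, ∑ l : Fin q1, if (l : ℕ) ≤ (k : ℕ) then M k l ^ 2 else 0)

namespace SHelp
set_option linter.unusedSectionVars false
set_option linter.unusedVariables false
variable {ι κ : Type*} [Fintype ι] [DecidableEq ι] [Fintype κ] [DecidableEq κ]

noncomputable def enSq (x : ι → ℝ) : ℝ := ∑ i, x i ^ 2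

lemma enSq_nonneg (x : ι → ℝ) : 0 ≤ enSq x := Finset.sum_nonneg fun i _ => sq_nonneg _

lemma norm_symm_equiv (x : ι → ℝ) :
    ‖(WithLp.equiv 2 (ι → ℝ)).symm x‖ = Real.sqrt (enSq x) := by
  rw [EuclideanSpace.norm_eq]
  congr 1
  simp [enSq, Real.norm_eq_abs, sq_abs]

lemma specNorm_nonneg (M : Matrix ι ι ℝ) : 0 ≤ specNorm M := norm_nonneg _

lemma clm_apply (M : Matrix ι ι ℝ) (x : ι → ℝ) :
    (Matrix.toEuclideanCLM (𝕜 := ℝ) M) ((WithLp.equiv 2 (ι → ℝ)).symm x)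
      = (WithLp.equiv 2 (ι → ℝ)).symm (M *ᵥ x) := by
  exact Matrix.toEuclideanCLM_toLp M x

lemma en_mulVec_le (M : Matrix ι ι ℝ) (x : ι → ℝ) :
    Real.sqrt (enSq (M *ᵥ x)) ≤ specNorm M * Real.sqrt (enSq x) := by
  have h := (Matrix.toEuclideanCLM (𝕜 := ℝ) M).le_opNorm ((WithLp.equiv 2 (ι → ℝ)).symm x)
  rwa [clm_apply, norm_symm_equiv, norm_symm_equiv] at h

lemma specNorm_le_of (M : Matrix ι ι ℝ) {c : ℝ} (hc : 0 ≤ c)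
    (h : ∀ x : ι → ℝ, enSq (M *ᵥ x) ≤ c ^ 2 * enSq x) : specNorm M ≤ c := by
  apply ContinuousLinearMap.opNorm_le_bound _ hc
  intro y
  obtain ⟨x, rfl⟩ := (WithLp.equiv 2 (ι → ℝ)).symm.surjective y
  have h2 : Real.sqrt (enSq (M *ᵥ x)) ≤ Real.sqrt (c ^ 2 * enSq x) :=
    Real.sqrt_le_sqrt (h x)
  rw [Real.sqrt_mul (sq_nonneg c), Real.sqrt_sq hc] at h2
  rwa [clm_apply, norm_symm_equiv, norm_symm_equiv]

lemma enSq_mulVec_le (M : Matrix ι ι ℝ) (x : ι → ℝ) :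
    enSq (M *ᵥ x) ≤ specNorm M ^ 2 * enSq x := by
  have h := en_mulVec_le M x
  nlinarith [Real.sq_sqrt (enSq_nonneg (M *ᵥ x)), Real.sq_sqrt (enSq_nonneg x),
    Real.sqrt_nonneg (enSq x), Real.sqrt_nonneg (enSq (M *ᵥ x)), specNorm_nonneg M]

lemma enSq_eq_dot (x : ι → ℝ) : enSq x = x ⬝ᵥ x := by
  simp [enSq, dotProduct, sq]

lemma dot_le (x y : ι → ℝ) : x ⬝ᵥ y ≤ Real.sqrt (enSq x) * Real.sqrt (enSq y) := by
  have h := Finset.sum_mul_sq_le_sq_mul_sq Finset.univ x y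
  have h2 : x ⬝ᵥ y ≤ |x ⬝ᵥ y| := le_abs_self _
  have h3 : |x ⬝ᵥ y| = Real.sqrt ((x ⬝ᵥ y) ^ 2) := (Real.sqrt_sq_eq_abs _).symm
  calc x ⬝ᵥ y ≤ Real.sqrt ((x ⬝ᵥ y) ^ 2) := h3 ▸ h2
    _ ≤ Real.sqrt (enSq x * enSq y) := Real.sqrt_le_sqrt (by simpa [dotProduct, enSq] using h)
    _ = _ := Real.sqrt_mul (enSq_nonneg x) _

lemma spec_mul_le (A B : Matrix ι ι ℝ) : specNorm (A * B) ≤ specNorm A * specNorm B := by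
  simp only [specNorm, _root_.map_mul]; exact norm_mul_le _ _

lemma spec_add_le (A B : Matrix ι ι ℝ) : specNorm (A + B) ≤ specNorm A + specNorm B := by
  simp only [specNorm, map_add]; exact norm_add_le _ _

lemma enSq_smul (c : ℝ) (x : ι → ℝ) : enSq (c • x) = c ^ 2 * enSq x := by
  simp [enSq, Finset.mul_sum, mul_pow]

lemma spec_smul_one_le (c : ℝ) : specNorm (c • (1 : Matrix ι ι ℝ)) ≤ |c| := by
  apply specNorm_le_of _ (abs_nonneg c)
  intro x
  rw [Matrix.smul_mulVec, Matrix.one_mulVec, enSq_smul, sq_abs]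

lemma enSq_mulVec_eq (A : Matrix κ ι ℝ) (w : ι → ℝ) :
    enSq (A *ᵥ w) = w ⬝ᵥ ((Aᵀ * A) *ᵥ w) := by
  rw [enSq_eq_dot, Matrix.dotProduct_mulVec, ← Matrix.mulVec_transpose,
    Matrix.mulVec_mulVec, dotProduct_comm]

lemma sq_trick {q e c : ℝ} (hq : 0 ≤ q) (he : 0 ≤ e) (hc : 0 ≤ c)
    (h : q ≤ Real.sqrt e * (c * Real.sqrt q)) : q ≤ c ^ 2 * e := by
  rcases hq.eq_or_lt with h0 | h0
  · rw [← h0]; positivity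
  · have hsq : 0 < Real.sqrt q := Real.sqrt_pos.2 h0
    have hq2 : Real.sqrt q * Real.sqrt q = q := Real.mul_self_sqrt hq
    have key : Real.sqrt q ≤ c * Real.sqrt e := by nlinarith
    nlinarith [Real.sq_sqrt he, Real.sq_sqrt hq, Real.sqrt_nonneg e,
      mul_le_mul key key (Real.sqrt_nonneg q) (by positivity)]

lemma spec_le_sqrt_of_eq (A C : Matrix ι ι ℝ) (h : Aᵀ * A = C) {β : ℝ} (hβ : 0 ≤ β)
    (hC : specNorm C ≤ β) : specNorm A ≤ Real.sqrt β := by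
  apply specNorm_le_of _ (Real.sqrt_nonneg _)
  intro w
  rw [Real.sq_sqrt hβ]
  calc enSq (A *ᵥ w) = w ⬝ᵥ (C *ᵥ w) := by rw [enSq_mulVec_eq, h]
    _ ≤ Real.sqrt (enSq w) * Real.sqrt (enSq (C *ᵥ w)) := dot_le _ _
    _ ≤ Real.sqrt (enSq w) * (specNorm C * Real.sqrt (enSq w)) := by
        exact mul_le_mul_of_nonneg_left (en_mulVec_le C w) (Real.sqrt_nonneg _)
    _ = specNorm C * (Real.sqrt (enSq w) * Real.sqrt (enSq w)) := by ring
    _ = specNorm C * enSq w := by rw [Real.mul_self_sqrt (enSq_nonneg w)]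
    _ ≤ β * enSq w := mul_le_mul_of_nonneg_right hC (enSq_nonneg w)

lemma spec_transpose_le (M : Matrix ι ι ℝ) : specNorm Mᵀ ≤ specNorm M := by
  apply specNorm_le_of _ (specNorm_nonneg M)
  intro x
  have h : enSq (Mᵀ *ᵥ x) = x ⬝ᵥ (M *ᵥ (Mᵀ *ᵥ x)) := by
    rw [enSq_mulVec_eq, Matrix.transpose_transpose, ← Matrix.mulVec_mulVec]
  apply sq_trick (enSq_nonneg _) (enSq_nonneg _) (specNorm_nonneg M)
  calc enSq (Mᵀ *ᵥ x) = x ⬝ᵥ (M *ᵥ (Mᵀ *ᵥ x)) := h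
    _ ≤ Real.sqrt (enSq x) * Real.sqrt (enSq (M *ᵥ (Mᵀ *ᵥ x))) := dot_le _ _
    _ ≤ Real.sqrt (enSq x) * (specNorm M * Real.sqrt (enSq (Mᵀ *ᵥ x))) :=
        mul_le_mul_of_nonneg_left (en_mulVec_le M _) (Real.sqrt_nonneg _)

lemma spec_inv_le (M : Matrix ι ι ℝ) {α : ℝ} (hα : 0 < α)
    (hM : M * M⁻¹ = 1) (hR : ∀ x, α * enSq x ≤ x ⬝ᵥ M *ᵥ x) :
    specNorm M⁻¹ ≤ α⁻¹ := by
  apply specNorm_le_of _ (inv_nonneg.2 hα.le)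
  intro x
  set y := M⁻¹ *ᵥ x with hy
  have hMy : M *ᵥ y = x := by rw [hy, Matrix.mulVec_mulVec, hM, Matrix.one_mulVec]
  have h1 : α * enSq y ≤ y ⬝ᵥ x := by have := hR y; rwa [hMy] at this
  have h2 : y ⬝ᵥ x ≤ Real.sqrt (enSq y) * Real.sqrt (enSq x) := dot_le _ _
  rcases (enSq_nonneg y).eq_or_lt with h0 | h0
  · rw [← h0]
    exact mul_nonneg (sq_nonneg _) (enSq_nonneg x)
  · have hsy : 0 < Real.sqrt (enSq y) := Real.sqrt_pos.2 h0
    have hey : Real.sqrt (enSq y) * Real.sqrt (enSq y) = enSq y :=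
      Real.mul_self_sqrt (enSq_nonneg y)
    have hex : Real.sqrt (enSq x) * Real.sqrt (enSq x) = enSq x :=
      Real.mul_self_sqrt (enSq_nonneg x)
    have key : α * Real.sqrt (enSq y) ≤ Real.sqrt (enSq x) := by nlinarith
    have h4 : α ^ 2 * enSq y ≤ enSq x := by
      nlinarith [mul_le_mul key key (by positivity) (Real.sqrt_nonneg (enSq x))]
    rw [inv_pow]
    calc enSq y = (α ^ 2)⁻¹ * (α ^ 2 * enSq y) := by field_simp
      _ ≤ (α ^ 2)⁻¹ * enSq x := mul_le_mul_of_nonneg_left h4 (by positivity)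
end SHelp

namespace SHelp
set_option linter.unusedSectionVars false
set_option linter.unusedVariables false
variable {ι κ : Type*} [Fintype ι] [DecidableEq ι] [Fintype κ] [DecidableEq κ]

noncomputable def frobSq (M : Matrix ι κ ℝ) : ℝ := ∑ i, ∑ j, (M i j) ^ 2

lemma frobSq_nonneg (M : Matrix ι κ ℝ) : 0 ≤ frobSq M := by
  apply Finset.sum_nonneg; intro i _; exact Finset.sum_nonneg fun j _ => sq_nonneg _

lemma frobNorm_eq (M : Matrix ι ι ℝ) : frobNorm M = Real.sqrt (frobSq M) := rfl

lemma frobNorm_nonneg (M : Matrix ι ι ℝ) : 0 ≤ frobNorm M := Real.sqrt_nonneg _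

lemma frobNorm_sq (M : Matrix ι ι ℝ) : frobNorm M ^ 2 = frobSq M := by
  rw [frobNorm_eq, Real.sq_sqrt (frobSq_nonneg M)]

lemma mulVec_col (X : Matrix ι ι ℝ) (Y : Matrix ι ι ℝ) (j : ι) :
    X *ᵥ (fun k => Y k j) = fun i => (X * Y) i j := by
  funext i
  simp [Matrix.mulVec, Matrix.mul_apply, dotProduct]

lemma frobSq_mul_le (X Y : Matrix ι ι ℝ) :
    frobSq (X * Y) ≤ specNorm X ^ 2 * frobSq Y := by
  have h : ∀ j : ι, ∑ i, ((X * Y) i j) ^ 2 ≤ specNorm X ^ 2 * ∑ k, (Y k j) ^ 2 := by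
    intro j
    have := enSq_mulVec_le X (fun k => Y k j)
    rwa [mulVec_col] at this
  calc frobSq (X * Y) = ∑ j, ∑ i, ((X * Y) i j) ^ 2 := Finset.sum_comm
    _ ≤ ∑ j, specNorm X ^ 2 * ∑ k, (Y k j) ^ 2 := Finset.sum_le_sum fun j _ => h j
    _ = specNorm X ^ 2 * frobSq Y := by rw [← Finset.mul_sum, frobSq, Finset.sum_comm]

lemma frob_mul_le_left (X Y : Matrix ι ι ℝ) :
    frobNorm (X * Y) ≤ specNorm X * frobNorm Y := by
  rw [frobNorm_eq, frobNorm_eq]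
  calc Real.sqrt (frobSq (X * Y)) ≤ Real.sqrt (specNorm X ^ 2 * frobSq Y) :=
        Real.sqrt_le_sqrt (frobSq_mul_le X Y)
    _ = specNorm X * Real.sqrt (frobSq Y) := by
        rw [Real.sqrt_mul (sq_nonneg _), Real.sqrt_sq (specNorm_nonneg X)]

lemma frobSq_transpose (M : Matrix ι κ ℝ) : frobSq Mᵀ = frobSq M := by
  rw [frobSq, Finset.sum_comm]; rfl

lemma frob_transpose (M : Matrix ι ι ℝ) : frobNorm Mᵀ = frobNorm M := by
  rw [frobNorm_eq, frobNorm_eq, frobSq_transpose]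

lemma frob_mul_le_right (X Y : Matrix ι ι ℝ) :
    frobNorm (X * Y) ≤ frobNorm X * specNorm Y := by
  calc frobNorm (X * Y) = frobNorm (Yᵀ * Xᵀ) := by rw [← Matrix.transpose_mul, frob_transpose]
    _ ≤ specNorm Yᵀ * frobNorm Xᵀ := frob_mul_le_left _ _
    _ ≤ specNorm Y * frobNorm X := by
        rw [frob_transpose]
        exact mul_le_mul_of_nonneg_right (spec_transpose_le Y) (frobNorm_nonneg _)
    _ = frobNorm X * specNorm Y := mul_comm _ _

lemma frobSq_eq_trace (M : Matrix ι ι ℝ) : frobSq M = Matrix.trace (Mᵀ * M) := by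
  rw [Matrix.trace]
  simp only [Matrix.diag, Matrix.mul_apply, Matrix.transpose_apply]
  rw [frobSq, Finset.sum_comm]
  congr 1; funext j; congr 1; funext i; ring

lemma enSq_mulVec_frobSq_le (M : Matrix ι κ ℝ) (x : κ → ℝ) :
    enSq (M *ᵥ x) ≤ frobSq M * enSq x := by
  rw [enSq, frobSq, Finset.sum_mul]
  apply Finset.sum_le_sum
  intro i _
  have h := Finset.sum_mul_sq_le_sq_mul_sq Finset.univ (fun j => M i j) x
  calc (M *ᵥ x) i ^ 2 = (∑ j, M i j * x j) ^ 2 := by rw [Matrix.mulVec, dotProduct]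
    _ ≤ (∑ j, M i j ^ 2) * ∑ j, x j ^ 2 := h
    _ = (∑ j, M i j ^ 2) * enSq x := rfl

lemma trace_sq_le (N : Matrix ι ι ℝ) :
    Matrix.trace N ^ 2 ≤ (Fintype.card ι : ℝ) * frobSq N := by
  have h := Finset.sum_mul_sq_le_sq_mul_sq Finset.univ (fun k : ι => N k k) (fun _ => (1:ℝ))
  have hd : ∑ k, (N k k) ^ 2 ≤ frobSq N := by
    apply Finset.sum_le_sum
    intro k _
    exact Finset.single_le_sum (fun j _ => sq_nonneg (N k j)) (Finset.mem_univ k)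
  have ht : Matrix.trace N = ∑ k, N k k := rfl
  calc Matrix.trace N ^ 2 = (∑ k, N k k * 1) ^ 2 := by rw [ht]; congr 1; simp
    _ ≤ (∑ k, (N k k) ^ 2) * ∑ _k : ι, (1:ℝ) ^ 2 := h
    _ = (∑ k, (N k k) ^ 2) * (Fintype.card ι : ℝ) := by simp
    _ ≤ frobSq N * (Fintype.card ι : ℝ) := by
        exact mul_le_mul_of_nonneg_right hd (by positivity)
    _ = (Fintype.card ι : ℝ) * frobSq N := mul_comm _ _

lemma frobSq_add_smul_one (M : Matrix ι ι ℝ) (c : ℝ) :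
    frobSq (M + c • 1) = frobSq M + 2 * c * Matrix.trace M + c ^ 2 * (Fintype.card ι : ℝ) := by
  have key : ∀ a : ι, ∑ b, ((M + c • 1) a b) ^ 2
      = (∑ b, M a b ^ 2) + (2 * c * M a a + c ^ 2) := by
    intro a
    have h1 : ∀ b, ((M + c • 1) a b) ^ 2
        = M a b ^ 2 + (if a = b then 2 * c * M a b + c ^ 2 else 0) := by
      intro b
      by_cases hab : a = b
      · simp [Matrix.add_apply, Matrix.smul_apply, Matrix.one_apply, hab]; ring
      · simp [Matrix.add_apply, Matrix.smul_apply, Matrix.one_apply, hab]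
    rw [Finset.sum_congr rfl (fun b _ => h1 b), Finset.sum_add_distrib]
    congr 1
    rw [Finset.sum_ite_eq Finset.univ a (fun b => 2 * c * M a b + c ^ 2)]
    simp
  rw [frobSq, Finset.sum_congr rfl (fun a _ => key a), Finset.sum_add_distrib,
    Finset.sum_add_distrib, ← Finset.mul_sum, Finset.sum_const, Finset.card_univ,
    nsmul_eq_mul]
  show (frobSq M) + (2 * c * (Matrix.trace M) + (Fintype.card ι : ℝ) * c ^ 2) = _
  ring
end SHelp


namespace SHelp
set_option linter.unusedSectionVars false
set_option linter.unusedVariables false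
variable {m q1 : ℕ} {nn : Fin m → ℕ}

lemma sigma_sum (f : (Σ i : Fin m, Fin (nn i)) → ℝ) :
    ∑ p, f p = ∑ i, ∑ a, f ⟨i, a⟩ := by
  rw [← Finset.univ_sigma_univ, Finset.sum_sigma]

lemma bd_mulVec (M : ∀ i : Fin m, Matrix (Fin (nn i)) (Fin (nn i)) ℝ)
    (x : (Σ i : Fin m, Fin (nn i)) → ℝ) (i : Fin m) (a : Fin (nn i)) :
    (Matrix.blockDiagonal' M *ᵥ x) ⟨i, a⟩ = (M i *ᵥ fun b => x ⟨i, b⟩) a := by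
  rw [Matrix.mulVec, dotProduct,
    sigma_sum (f := fun p => Matrix.blockDiagonal' M ⟨i, a⟩ p * x p)]
  rw [Finset.sum_eq_single i]
  · simp [Matrix.blockDiagonal'_apply_eq, Matrix.mulVec, dotProduct]
  · intro j _ hj
    apply Finset.sum_eq_zero
    intro b _
    rw [Matrix.blockDiagonal'_apply_ne _ _ _ (Ne.symm hj)]
    ring
  · intro h; exact absurd (Finset.mem_univ i) h

lemma SigmaClust_mulVec (Z : ∀ i : Fin m, Matrix (Fin (nn i)) (Fin q1) ℝ)
    (V : Matrix (Fin q1) (Fin q1) ℝ) (vr : ℝ)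
    (x : (Σ i : Fin m, Fin (nn i)) → ℝ) (i : Fin m) (a : Fin (nn i)) :
    (SigmaClust nn Z V vr *ᵥ x) ⟨i, a⟩
      = ((Z i * V * (Z i)ᵀ + vr • 1) *ᵥ fun b => x ⟨i, b⟩) a := by
  rw [SigmaClust, Matrix.add_mulVec, Matrix.add_mulVec, Pi.add_apply, Pi.add_apply,
    bd_mulVec]
  congr 1
  rw [Matrix.smul_mulVec, Matrix.one_mulVec, Matrix.smul_mulVec,
    Matrix.one_mulVec]
  rfl

lemma dot_SigmaClust (Z : ∀ i : Fin m, Matrix (Fin (nn i)) (Fin q1) ℝ)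
    (V : Matrix (Fin q1) (Fin q1) ℝ) (vr : ℝ) (x : (Σ i : Fin m, Fin (nn i)) → ℝ) :
    x ⬝ᵥ (SigmaClust nn Z V vr *ᵥ x)
      = ∑ i, (fun b => x ⟨i, b⟩) ⬝ᵥ ((Z i * V * (Z i)ᵀ + vr • 1) *ᵥ fun b => x ⟨i, b⟩) := by
  rw [dotProduct, sigma_sum (f := fun p => x p * (SigmaClust nn Z V vr *ᵥ x) p)]
  apply Finset.sum_congr rfl
  intro i _
  rw [dotProduct]
  apply Finset.sum_congr rfl
  intro a _
  rw [SigmaClust_mulVec]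

lemma enSq_sigma (x : (Σ i : Fin m, Fin (nn i)) → ℝ) :
    enSq x = ∑ i, enSq (fun b => x ⟨i, b⟩) :=
  sigma_sum _

lemma SigmaClust_apply_same (Z : ∀ i : Fin m, Matrix (Fin (nn i)) (Fin q1) ℝ)
    (V : Matrix (Fin q1) (Fin q1) ℝ) (vr : ℝ) (i : Fin m) (a b : Fin (nn i)) :
    SigmaClust nn Z V vr ⟨i, a⟩ ⟨i, b⟩
      = (Z i * V * (Z i)ᵀ + vr • (1 : Matrix (Fin (nn i)) (Fin (nn i)) ℝ)) a b := by
  simp only [SigmaClust, Matrix.add_apply, Matrix.smul_apply, Matrix.one_apply,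
    Matrix.blockDiagonal'_apply_eq]
  congr 1
  by_cases hab : a = b <;> simp [hab]

lemma SigmaClust_apply_ne (Z : ∀ i : Fin m, Matrix (Fin (nn i)) (Fin q1) ℝ)
    (V : Matrix (Fin q1) (Fin q1) ℝ) (vr : ℝ) {i j : Fin m} (h : i ≠ j)
    (a : Fin (nn i)) (b : Fin (nn j)) :
    SigmaClust nn Z V vr ⟨i, a⟩ ⟨j, b⟩ = 0 := by
  simp only [SigmaClust, Matrix.add_apply, Matrix.smul_apply, Matrix.one_apply]
  rw [Matrix.blockDiagonal'_apply_ne _ _ _ h]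
  have : (⟨i, a⟩ : Σ k : Fin m, Fin (nn k)) ≠ ⟨j, b⟩ := by
    intro hc; exact h (congrArg Sigma.fst hc)
  simp [this]

lemma frobSq_SigmaClust (Z : ∀ i : Fin m, Matrix (Fin (nn i)) (Fin q1) ℝ)
    (V : Matrix (Fin q1) (Fin q1) ℝ) (vr : ℝ) :
    frobSq (SigmaClust nn Z V vr) = ∑ i, frobSq (Z i * V * (Z i)ᵀ + vr • 1) := by
  rw [frobSq, sigma_sum (f := fun p => ∑ p', (SigmaClust nn Z V vr p p') ^ 2)]
  apply Finset.sum_congr rfl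
  intro i _
  rw [frobSq]
  apply Finset.sum_congr rfl
  intro a _
  rw [sigma_sum (f := fun p' => (SigmaClust nn Z V vr ⟨i, a⟩ p') ^ 2)]
  rw [Finset.sum_eq_single i]
  · apply Finset.sum_congr rfl
    intro b _
    rw [SigmaClust_apply_same]
  · intro j _ hj
    apply Finset.sum_eq_zero
    intro b _
    rw [SigmaClust_apply_ne _ _ _ (Ne.symm hj)]
    ring
  · intro h; exact absurd (Finset.mem_univ i) h

lemma SigmaClust_transpose (Z : ∀ i : Fin m, Matrix (Fin (nn i)) (Fin q1) ℝ)
    (V : Matrix (Fin q1) (Fin q1) ℝ) (vr : ℝ) (hV : Vᵀ = V) :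
    (SigmaClust nn Z V vr)ᵀ = SigmaClust nn Z V vr := by
  rw [SigmaClust, Matrix.transpose_add, Matrix.blockDiagonal'_transpose]
  have hfun : (fun k => (Z k * V * (Z k)ᵀ)ᵀ) = fun k => Z k * V * (Z k)ᵀ := by
    funext k
    rw [Matrix.transpose_mul, Matrix.transpose_mul, Matrix.transpose_transpose, hV,
      Matrix.mul_assoc]
  rw [hfun, Matrix.transpose_smul, Matrix.transpose_one]
end SHelp

namespace SHelp
set_option linter.unusedSectionVars false
set_option linter.unusedVariables false

lemma enSq_pos {ι : Type*} [Fintype ι] {x : ι → ℝ} (hx : x ≠ 0) : 0 < enSq x := by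
  obtain ⟨k, hk⟩ := Function.ne_iff.1 hx
  have hk' : x k ≠ 0 := by simpa using hk
  have h1 : (0:ℝ) < x k ^ 2 :=
    lt_of_le_of_ne (sq_nonneg _) (Ne.symm (pow_ne_zero 2 hk'))
  exact lt_of_lt_of_le h1 (Finset.single_le_sum (fun j _ => sq_nonneg (x j))
    (Finset.mem_univ k))

lemma msqrt_props {ι : Type*} [Fintype ι] [DecidableEq ι] (M : Matrix ι ι ℝ)
    (h : M.PosSemidef) : msqrt M * msqrt M = M ∧ (msqrt M)ᵀ = msqrt M := by
  have hU : (star h.1.eigenvectorUnitary : Matrix ι ι ℝ) *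
      (h.1.eigenvectorUnitary : Matrix ι ι ℝ) = 1 := Unitary.coe_star_mul_self _
  have hst : (star h.1.eigenvectorUnitary : Matrix ι ι ℝ) =
      (h.1.eigenvectorUnitary : Matrix ι ι ℝ)ᵀ := by
    rw [Matrix.star_eq_conjTranspose,
      Matrix.conjTranspose_eq_transpose_of_trivial]
  have hD : Matrix.diagonal (fun i => Real.sqrt (h.1.eigenvalues i)) *
      Matrix.diagonal (fun i => Real.sqrt (h.1.eigenvalues i)) =
      Matrix.diagonal (RCLike.ofReal ∘ h.1.eigenvalues) := by
    rw [Matrix.diagonal_mul_diagonal]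
    congr 1; funext i
    simp [Real.mul_self_sqrt (h.eigenvalues_nonneg i)]
  rw [msqrt, dif_pos h]
  constructor
  · conv_rhs => rw [h.1.spectral_theorem, Unitary.conjStarAlgAut_apply, ← hD]
    simp only [Matrix.mul_assoc]
    rw [← Matrix.mul_assoc (star h.1.eigenvectorUnitary : Matrix ι ι ℝ), hU, Matrix.one_mul]
  · rw [Matrix.transpose_mul, Matrix.transpose_mul, Matrix.diagonal_transpose, hst,
      Matrix.transpose_transpose]
    simp only [Matrix.mul_assoc]

variable {q1 n' : ℕ} {c2 : ℝ}

lemma zt_bound (Z : Matrix (Fin n') (Fin q1) ℝ) (hc2 : 0 < c2)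
    (hup : ∀ u : Fin q1 → ℝ, u ⬝ᵥ (Zᵀ * Z) *ᵥ u ≤ c2 * enSq u)
    (y : Fin n' → ℝ) : enSq (Zᵀ *ᵥ y) ≤ c2 * enSq y := by
  have hz : ∀ u : Fin q1 → ℝ, enSq (Z *ᵥ u) ≤ c2 * enSq u := by
    intro u; rw [enSq_mulVec_eq]; exact hup u
  have h1 : enSq (Zᵀ *ᵥ y) = y ⬝ᵥ (Z *ᵥ (Zᵀ *ᵥ y)) := by
    rw [enSq_mulVec_eq, Matrix.transpose_transpose, ← Matrix.mulVec_mulVec]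
  have h2 : y ⬝ᵥ (Z *ᵥ (Zᵀ *ᵥ y)) ≤ Real.sqrt (enSq y) *
      Real.sqrt (enSq (Z *ᵥ (Zᵀ *ᵥ y))) := dot_le _ _
  have h3 : Real.sqrt (enSq (Z *ᵥ (Zᵀ *ᵥ y))) ≤
      Real.sqrt c2 * Real.sqrt (enSq (Zᵀ *ᵥ y)) := by
    rw [← Real.sqrt_mul hc2.le]
    exact Real.sqrt_le_sqrt (hz _)
  have key : enSq (Zᵀ *ᵥ y) ≤ Real.sqrt (enSq y) * (Real.sqrt c2 * Real.sqrt (enSq (Zᵀ *ᵥ y))) := by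
    calc enSq (Zᵀ *ᵥ y) = y ⬝ᵥ (Z *ᵥ (Zᵀ *ᵥ y)) := h1
      _ ≤ Real.sqrt (enSq y) * Real.sqrt (enSq (Z *ᵥ (Zᵀ *ᵥ y))) := h2
      _ ≤ _ := mul_le_mul_of_nonneg_left h3 (Real.sqrt_nonneg _)
  have := sq_trick (enSq_nonneg (Zᵀ *ᵥ y)) (enSq_nonneg y) (Real.sqrt_nonneg c2) key
  rwa [Real.sq_sqrt hc2.le] at this

lemma block_spec_sq (Z : Matrix (Fin n') (Fin q1) ℝ) (hc2 : 0 < c2)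
    (hup : ∀ u : Fin q1 → ℝ, u ⬝ᵥ (Zᵀ * Z) *ᵥ u ≤ c2 * enSq u)
    (V : Matrix (Fin q1) (Fin q1) ℝ) (y : Fin n' → ℝ) :
    enSq ((Z * V * Zᵀ) *ᵥ y) ≤ (c2 * frobNorm V) ^ 2 * enSq y := by
  have hz : ∀ u : Fin q1 → ℝ, enSq (Z *ᵥ u) ≤ c2 * enSq u := by
    intro u; rw [enSq_mulVec_eq]; exact hup u
  have h0 : (Z * V * Zᵀ) *ᵥ y = Z *ᵥ (V *ᵥ (Zᵀ *ᵥ y)) := by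
    rw [Matrix.mulVec_mulVec, Matrix.mulVec_mulVec]
  rw [h0]
  have e1 := hz (V *ᵥ (Zᵀ *ᵥ y))
  have e2 := enSq_mulVec_frobSq_le V (Zᵀ *ᵥ y)
  have e3 := zt_bound Z hc2 hup y
  have hfs : frobSq V = frobNorm V ^ 2 := (frobNorm_sq V).symm
  calc enSq (Z *ᵥ V *ᵥ Zᵀ *ᵥ y) ≤ c2 * enSq (V *ᵥ Zᵀ *ᵥ y) := e1
    _ ≤ c2 * (frobSq V * enSq (Zᵀ *ᵥ y)) := mul_le_mul_of_nonneg_left e2 hc2.le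
    _ ≤ c2 * (frobSq V * (c2 * enSq y)) := by
        exact mul_le_mul_of_nonneg_left
          (mul_le_mul_of_nonneg_left e3 (frobSq_nonneg V)) hc2.le
    _ = (c2 * frobNorm V) ^ 2 * enSq y := by rw [mul_pow, ← hfs]; ring

lemma dot_conj_nonneg (Z : Matrix (Fin n') (Fin q1) ℝ) (Ψ : Matrix (Fin q1) (Fin q1) ℝ)
    (hΨ : Ψ.PosSemidef) (y : Fin n' → ℝ) : 0 ≤ y ⬝ᵥ ((Z * Ψ * Zᵀ) *ᵥ y) := by
  have h0 : (Z * Ψ * Zᵀ) *ᵥ y = Z *ᵥ (Ψ *ᵥ (Zᵀ *ᵥ y)) := by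
    rw [Matrix.mulVec_mulVec, Matrix.mulVec_mulVec]
  rw [h0, Matrix.dotProduct_mulVec, ← Matrix.mulVec_transpose]
  have := hΨ.dotProduct_mulVec_nonneg (Zᵀ *ᵥ y)
  rwa [star_trivial] at this

lemma block_lower (Z : Matrix (Fin n') (Fin q1) ℝ) (hc2 : 1 < c2)
    (hlow : ∀ x : Fin q1 → ℝ, c2⁻¹ * enSq x ≤ x ⬝ᵥ (Zᵀ * Z) *ᵥ x)
    (V : Matrix (Fin q1) (Fin q1) ℝ) (hV : Vᵀ = V) (vr : ℝ) :
    ∃ w : ℝ, 0 ≤ w ∧ Real.sqrt (frobSq V) ≤ c2 * w ∧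
      (w - |vr| * Real.sqrt q1) ^ 2 + vr ^ 2 * ((n' : ℝ) - q1)
        ≤ frobSq (Z * V * Zᵀ + vr • 1) := by
  have hc2pos : (0:ℝ) < c2 := lt_trans one_pos hc2
  set G := Zᵀ * Z with hGdef
  -- G is positive definite
  have hGherm : G.IsHermitian := by
    rw [Matrix.IsHermitian, Matrix.conjTranspose_eq_transpose_of_trivial, hGdef,
      Matrix.transpose_mul, Matrix.transpose_transpose]
  have hGpd : G.PosDef := by
    refine posDef_iff_dotProduct_mulVec.2 ⟨hGherm, fun x hx => ?_⟩
    rw [star_trivial]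
    have h1 : 0 < c2⁻¹ * enSq x := mul_pos (inv_pos.2 hc2pos) (enSq_pos hx)
    exact lt_of_lt_of_le h1 (hlow x)
  have hGdet : G.det ≠ 0 := hGpd.det_pos.ne'
  set L := msqrt G with hLdef
  have hLL : L * L = G := (msqrt_props G hGpd.posSemidef).1
  have hLsymm : Lᵀ = L := (msqrt_props G hGpd.posSemidef).2
  have hLdet : L.det ≠ 0 := by
    intro h
    exact hGdet (by rw [← hLL, Matrix.det_mul, h, mul_zero])
  have hLinv : L * L⁻¹ = 1 := Matrix.mul_nonsing_inv _ (isUnit_iff_ne_zero.2 hLdet)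
  have hinvL : L⁻¹ * L = 1 := Matrix.nonsing_inv_mul _ (isUnit_iff_ne_zero.2 hLdet)
  have hGinv : G⁻¹ = L⁻¹ * L⁻¹ := by rw [← hLL, Matrix.mul_inv_rev]
  have hspecGinv : specNorm G⁻¹ ≤ c2 := by
    have h := spec_inv_le G (inv_pos.2 hc2pos) (Matrix.mul_nonsing_inv _ (isUnit_iff_ne_zero.2 hGdet)) hlow
    rwa [inv_inv] at h
  have hLinvsymm : (L⁻¹)ᵀ = L⁻¹ := by rw [Matrix.transpose_nonsing_inv, hLsymm]
  have hspecLinv : specNorm L⁻¹ ≤ Real.sqrt c2 := by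
    apply spec_le_sqrt_of_eq L⁻¹ G⁻¹ _ hc2pos.le hspecGinv
    rw [hLinvsymm]; exact hGinv.symm
  set N := L * V * L with hNdef
  set w := frobNorm N with hwdef
  have hwnn : 0 ≤ w := frobNorm_nonneg N
  refine ⟨w, hwnn, ?_, ?_⟩
  -- frobNorm V ≤ c2 * w
  · have hVN : V = L⁻¹ * N * L⁻¹ := by
      have h1 : L⁻¹ * N * L⁻¹ = (L⁻¹ * L) * V * (L * L⁻¹) := by
        rw [hNdef]
        simp only [Matrix.mul_assoc]
      rw [h1, hinvL, hLinv, Matrix.one_mul, Matrix.mul_one]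
    have h2 : frobNorm V ≤ specNorm L⁻¹ * frobNorm N * specNorm L⁻¹ := by
      calc frobNorm V = frobNorm (L⁻¹ * N * L⁻¹) := by rw [← hVN]
        _ ≤ frobNorm (L⁻¹ * N) * specNorm L⁻¹ := frob_mul_le_right _ _
        _ ≤ specNorm L⁻¹ * frobNorm N * specNorm L⁻¹ := by
            exact mul_le_mul_of_nonneg_right (frob_mul_le_left _ _) (specNorm_nonneg _)
    have h3 : specNorm L⁻¹ * frobNorm N * specNorm L⁻¹ ≤ c2 * w := by
      have hs := Real.sqrt_nonneg c2
      have hsq : Real.sqrt c2 * Real.sqrt c2 = c2 := Real.mul_self_sqrt hc2pos.le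
      have ha := specNorm_nonneg (L⁻¹ : Matrix (Fin q1) (Fin q1) ℝ)
      have haa : specNorm L⁻¹ * specNorm L⁻¹ ≤ c2 := by
        have h4 := mul_le_mul hspecLinv hspecLinv ha hs
        rwa [hsq] at h4
      calc specNorm L⁻¹ * frobNorm N * specNorm L⁻¹
          = (specNorm L⁻¹ * specNorm L⁻¹) * w := by rw [hwdef]; ring
        _ ≤ c2 * w := mul_le_mul_of_nonneg_right haa hwnn
    rw [← frobNorm_eq]
    exact h2.trans h3
  -- the frobenius lower bound
  · set M := Z * V * Zᵀ with hMdef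
    have hMsymm : Mᵀ = M := by
      rw [hMdef, Matrix.transpose_mul, Matrix.transpose_mul, Matrix.transpose_transpose,
        hV, Matrix.mul_assoc]
    have hNsymm : Nᵀ = N := by
      rw [hNdef, Matrix.transpose_mul, Matrix.transpose_mul, hLsymm, hV, Matrix.mul_assoc]
    -- traces
    have htrM : Matrix.trace M = Matrix.trace (V * G) := by
      rw [hMdef, Matrix.mul_assoc, Matrix.trace_mul_comm, Matrix.mul_assoc, hGdef]
    have htrN : Matrix.trace N = Matrix.trace (V * G) := by
      rw [hNdef, Matrix.mul_assoc, Matrix.trace_mul_comm, Matrix.mul_assoc, hLL]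
    have hMM : M * M = Z * (V * G * (V * Zᵀ)) := by
      rw [hMdef, hGdef]; simp only [Matrix.mul_assoc]
    have hNN : N * N = L * (V * G * (V * L)) := by
      rw [hNdef, ← hLL]; simp only [Matrix.mul_assoc]
    have htrsq : Matrix.trace (M * M) = Matrix.trace (N * N) := by
      rw [hMM, hNN, Matrix.trace_mul_comm (Z) (V * G * (V * Zᵀ)),
        Matrix.trace_mul_comm (L) (V * G * (V * L))]
      rw [Matrix.mul_assoc (V * G) (V * Zᵀ) Z, Matrix.mul_assoc (V * G) (V * L) L]
      rw [Matrix.mul_assoc V Zᵀ Z, Matrix.mul_assoc V L L, hLL, hGdef]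
    have hfM : frobSq M = frobSq N := by
      rw [frobSq_eq_trace, frobSq_eq_trace, hMsymm, hNsymm, htrsq]
    -- assemble
    have hdecomp : frobSq (M + vr • 1)
        = frobSq N + 2 * vr * Matrix.trace N + vr ^ 2 * (n' : ℝ) := by
      rw [frobSq_add_smul_one, hfM, htrM, ← htrN, Fintype.card_fin]
    have htrb : Matrix.trace N ^ 2 ≤ (q1 : ℝ) * frobSq N := by
      have h := trace_sq_le N
      rwa [Fintype.card_fin] at h
    have hw2 : w ^ 2 = frobSq N := frobNorm_sq N
    have habs : |Matrix.trace N| ≤ Real.sqrt q1 * w := by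
      have h1 : |Matrix.trace N| = Real.sqrt (Matrix.trace N ^ 2) :=
        (Real.sqrt_sq_eq_abs _).symm
      rw [h1]
      calc Real.sqrt (Matrix.trace N ^ 2) ≤ Real.sqrt ((q1:ℝ) * w ^ 2) := by
            apply Real.sqrt_le_sqrt; rw [hw2]; exact htrb
        _ = Real.sqrt q1 * w := by
            rw [Real.sqrt_mul (Nat.cast_nonneg q1), Real.sqrt_sq hwnn]
    have hcross : -( |vr| * (Real.sqrt q1 * w)) ≤ vr * Matrix.trace N := by
      have h1 : |vr * Matrix.trace N| ≤ |vr| * (Real.sqrt q1 * w) := by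
        rw [abs_mul]
        exact mul_le_mul_of_nonneg_left habs (abs_nonneg vr)
      linarith [neg_abs_le (vr * Matrix.trace N)]
    have hq1 : (Real.sqrt q1) ^ 2 = (q1 : ℝ) := Real.sq_sqrt (Nat.cast_nonneg q1)
    rw [hdecomp]
    have hvr : vr ^ 2 = |vr| ^ 2 := (sq_abs vr).symm
    nlinarith [hcross, hq1, hw2]
  done

variable {m : ℕ} {nn : Fin m → ℕ}

lemma spec_SigmaClust_le (Z : ∀ i : Fin m, Matrix (Fin (nn i)) (Fin q1) ℝ)
    (hc2pos : 0 < c2)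
    (hup : ∀ (i : Fin m) (u : Fin q1 → ℝ), u ⬝ᵥ ((Z i)ᵀ * Z i) *ᵥ u ≤ c2 * enSq u)
    (V : Matrix (Fin q1) (Fin q1) ℝ) (vr : ℝ) :
    specNorm (SigmaClust nn Z V vr) ≤ c2 * frobNorm V + |vr| := by
  have hsplit : SigmaClust nn Z V vr = SigmaClust nn Z V 0 + vr • 1 := by
    rw [SigmaClust, SigmaClust, zero_smul, add_zero]
  rw [hsplit]
  refine (spec_add_le _ _).trans (add_le_add ?_ (spec_smul_one_le vr))
  apply specNorm_le_of _ (mul_nonneg hc2pos.le (frobNorm_nonneg V))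
  intro x
  have hx : ∀ (i : Fin m) (a : Fin (nn i)), (SigmaClust nn Z V 0 *ᵥ x) ⟨i, a⟩
      = ((Z i * V * (Z i)ᵀ) *ᵥ fun b => x ⟨i, b⟩) a := by
    intro i a
    rw [SigmaClust_mulVec, zero_smul, add_zero]
  calc enSq (SigmaClust nn Z V 0 *ᵥ x)
      = ∑ i, enSq (fun a => (SigmaClust nn Z V 0 *ᵥ x) ⟨i, a⟩) := enSq_sigma _
    _ = ∑ i, enSq ((Z i * V * (Z i)ᵀ) *ᵥ fun b => x ⟨i, b⟩) := by
        apply Finset.sum_congr rfl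
        intro i _
        congr 1
        funext a
        exact hx i a
    _ ≤ ∑ i, (c2 * frobNorm V) ^ 2 * enSq (fun b => x ⟨i, b⟩) := by
        apply Finset.sum_le_sum
        intro i _
        exact block_spec_sq (Z i) hc2pos (hup i) V _
    _ = (c2 * frobNorm V) ^ 2 * enSq x := by rw [← Finset.mul_sum, ← enSq_sigma]

lemma SigmaClust_rayleigh_lower (Z : ∀ i : Fin m, Matrix (Fin (nn i)) (Fin q1) ℝ)
    (Ψ : Matrix (Fin q1) (Fin q1) ℝ) (hΨ : Ψ.PosSemidef) (ψr : ℝ)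
    (x : (Σ i : Fin m, Fin (nn i)) → ℝ) :
    ψr * enSq x ≤ x ⬝ᵥ (SigmaClust nn Z Ψ ψr *ᵥ x) := by
  rw [dot_SigmaClust, enSq_sigma, Finset.mul_sum]
  apply Finset.sum_le_sum
  intro i _
  rw [Matrix.add_mulVec, dotProduct_add, Matrix.smul_mulVec, Matrix.one_mulVec]
  have h1 : (fun b => x ⟨i, b⟩) ⬝ᵥ ψr • (fun b => x ⟨i, b⟩)
      = ψr * enSq (fun b => x ⟨i, b⟩) := by
    rw [dotProduct_smul, enSq_eq_dot, smul_eq_mul]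
  rw [h1]
  linarith [dot_conj_nonneg (Z i) Ψ hΨ (fun b => x ⟨i, b⟩)]

lemma frobSq_eq_zero_iff {ι κ : Type*} [Fintype ι] [Fintype κ] {M : Matrix ι κ ℝ}
    (h : frobSq M = 0) : M = 0 := by
  ext i j
  have h1 : ∀ i' ∈ Finset.univ, (0:ℝ) ≤ ∑ j', (M i' j') ^ 2 :=
    fun i' _ => Finset.sum_nonneg fun j' _ => sq_nonneg _
  have h2 := (Finset.sum_eq_zero_iff_of_nonneg h1).1 h i (Finset.mem_univ i)
  have h3 := (Finset.sum_eq_zero_iff_of_nonneg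
    (fun j' _ => sq_nonneg (M i j'))).1 h2 j (Finset.mem_univ j)
  have := pow_eq_zero_iff (n := 2) (by norm_num) |>.1 h3
  simpa using this
end SHelp

namespace SHelp
set_option linter.unusedSectionVars false
set_option linter.unusedVariables false

set_option maxHeartbeats 1000000
set_option synthInstance.maxHeartbeats 1000000

lemma global_lower {m q1 : ℕ} {nn : Fin m → ℕ}
    (Z : ∀ i : Fin m, Matrix (Fin (nn i)) (Fin q1) ℝ) {c1 c2 : ℝ}
    (hc1 : 1 < c1) (hc2 : 1 < c2) (hq1 : 1 ≤ q1) (hm : 1 ≤ m)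
    (hcnt : c1 * ((m : ℝ) * (q1 : ℝ)) ≤ ((∑ i, nn i : ℕ) : ℝ))
    (hlow : ∀ (i : Fin m) (x : Fin q1 → ℝ), c2⁻¹ * enSq x ≤ x ⬝ᵥ ((Z i)ᵀ * Z i) *ᵥ x)
    (V : Matrix (Fin q1) (Fin q1) ℝ) (hV : Vᵀ = V) (vr : ℝ) :
    (min (c1 - 1) 1 / (8 * c2 ^ 2)) * ((m : ℝ) * (frobSq V + vr ^ 2))
      ≤ frobSq (SigmaClust nn Z V vr) := by
  have hc2pos : (0:ℝ) < c2 := lt_trans one_pos hc2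
  have hq1R : (1:ℝ) ≤ (q1 : ℝ) := by exact_mod_cast hq1
  have hmR : (1:ℝ) ≤ (m : ℝ) := by exact_mod_cast hm
  set μ := min (c1 - 1) 1 with hμdef
  have hμpos : 0 < μ := lt_min (by linarith) one_pos
  have hμle1 : μ ≤ 1 := min_le_right _ _
  have hμlec : μ ≤ c1 - 1 := min_le_left _ _
  have h8ge : (1:ℝ) ≤ 8 * c2 ^ 2 := by nlinarith
  have h8pos : (0:ℝ) < 8 * c2 ^ 2 := by positivity
  choose w hw0 hws hwl using fun i => block_lower (Z i) hc2 (hlow i) V hV vr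
  set t := |vr| with htdef
  set u := t * Real.sqrt q1 with hudef
  set sv := Real.sqrt (frobSq V) with hsvdef
  have hsvnn : 0 ≤ sv := Real.sqrt_nonneg _
  have hsv2 : sv ^ 2 = frobSq V := Real.sq_sqrt (frobSq_nonneg V)
  have htnn : 0 ≤ t := abs_nonneg vr
  have hunn : 0 ≤ u := mul_nonneg htnn (Real.sqrt_nonneg _)
  have hu2 : u ^ 2 = vr ^ 2 * (q1 : ℝ) := by
    rw [hudef, mul_pow, Real.sq_sqrt (Nat.cast_nonneg q1), sq_abs]
  have hsum : frobSq (SigmaClust nn Z V vr) = ∑ i, frobSq (Z i * V * (Z i)ᵀ + vr • 1) :=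
    frobSq_SigmaClust Z V vr
  have hge : ∑ i, ((w i - u) ^ 2 + vr ^ 2 * ((nn i : ℝ) - (q1 : ℝ)))
      ≤ ∑ i, frobSq (Z i * V * (Z i)ᵀ + vr • 1) :=
    Finset.sum_le_sum fun i _ => hwl i
  have hsplit : ∑ i, ((w i - u) ^ 2 + vr ^ 2 * ((nn i : ℝ) - (q1 : ℝ)))
      = (∑ i, (w i - u) ^ 2) + vr ^ 2 * (((∑ i, nn i : ℕ) : ℝ) - (m : ℝ) * (q1 : ℝ)) := by
    rw [Finset.sum_add_distrib, ← Finset.mul_sum]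
    congr 2
    rw [Finset.sum_sub_distrib, Finset.sum_const, Finset.card_univ, Fintype.card_fin,
      nsmul_eq_mul]
    push_cast
    ring
  have hT : vr ^ 2 * ((c1 - 1) * ((m : ℝ) * (q1 : ℝ)))
      ≤ vr ^ 2 * (((∑ i, nn i : ℕ) : ℝ) - (m : ℝ) * (q1 : ℝ)) := by
    apply mul_le_mul_of_nonneg_left _ (sq_nonneg vr)
    nlinarith
  have hsq_nonneg : (0:ℝ) ≤ ∑ i, (w i - u) ^ 2 :=
    Finset.sum_nonneg fun i _ => sq_nonneg _
  rw [hsum]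
  refine le_trans ?_ (le_trans (le_of_eq hsplit.symm) hge)
  by_cases hcase : 2 * c2 * u ≤ sv
  -- Case A
  · have hterm : ∀ i : Fin m, frobSq V / (4 * c2 ^ 2) ≤ (w i - u) ^ 2 := by
      intro i
      have h2 := hws i
      have h1 : sv ≤ 2 * c2 * (w i - u) := by nlinarith
      rw [div_le_iff₀ (by positivity : (0:ℝ) < 4 * c2 ^ 2)]
      nlinarith [sq_nonneg (w i - u)]
    have hA : (m : ℝ) * (frobSq V / (4 * c2 ^ 2)) ≤ ∑ i, (w i - u) ^ 2 := by
      calc (m : ℝ) * (frobSq V / (4 * c2 ^ 2))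
          = ∑ _i : Fin m, frobSq V / (4 * c2 ^ 2) := by
            rw [Finset.sum_const, Finset.card_univ, Fintype.card_fin, nsmul_eq_mul]
        _ ≤ ∑ i, (w i - u) ^ 2 := Finset.sum_le_sum fun i _ => hterm i
    have hκ4 : μ / (8 * c2 ^ 2) ≤ 1 / (4 * c2 ^ 2) := by
      apply div_le_div₀ one_pos.le hμle1 (by positivity) (by nlinarith)
    have e1 : μ / (8 * c2 ^ 2) * ((m : ℝ) * frobSq V)
        ≤ (m : ℝ) * (frobSq V / (4 * c2 ^ 2)) := by
      have h3 := mul_le_mul_of_nonneg_right hκ4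
        (mul_nonneg (Nat.cast_nonneg m) (frobSq_nonneg V))
      calc μ / (8 * c2 ^ 2) * ((m:ℝ) * frobSq V)
          ≤ 1 / (4 * c2 ^ 2) * ((m:ℝ) * frobSq V) := h3
        _ = (m:ℝ) * (frobSq V / (4 * c2 ^ 2)) := by ring
    have hκc : μ / (8 * c2 ^ 2) ≤ c1 - 1 :=
      le_trans (div_le_self hμpos.le h8ge) hμlec
    have e2 : μ / (8 * c2 ^ 2) * ((m : ℝ) * vr ^ 2)
        ≤ vr ^ 2 * ((c1 - 1) * ((m : ℝ) * (q1 : ℝ))) := by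
      have h1 : μ / (8 * c2 ^ 2) * ((m:ℝ) * vr ^ 2) ≤ (c1 - 1) * ((m:ℝ) * vr ^ 2) :=
        mul_le_mul_of_nonneg_right hκc (by positivity)
      have h2 : (c1 - 1) * ((m:ℝ) * vr ^ 2) ≤ (c1 - 1) * ((m:ℝ) * ((q1:ℝ) * vr ^ 2)) := by
        apply mul_le_mul_of_nonneg_left _ (by linarith : (0:ℝ) ≤ c1 - 1)
        apply mul_le_mul_of_nonneg_left _ (Nat.cast_nonneg m)
        exact le_mul_of_one_le_left (sq_nonneg vr) hq1R
      calc μ / (8 * c2 ^ 2) * ((m:ℝ) * vr ^ 2) ≤ (c1 - 1) * ((m:ℝ) * vr ^ 2) := h1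
        _ ≤ (c1 - 1) * ((m:ℝ) * ((q1:ℝ) * vr ^ 2)) := h2
        _ = vr ^ 2 * ((c1 - 1) * ((m : ℝ) * (q1 : ℝ))) := by ring
    calc μ / (8 * c2 ^ 2) * ((m : ℝ) * (frobSq V + vr ^ 2))
        = μ / (8 * c2 ^ 2) * ((m : ℝ) * frobSq V)
          + μ / (8 * c2 ^ 2) * ((m : ℝ) * vr ^ 2) := by ring
      _ ≤ (m : ℝ) * (frobSq V / (4 * c2 ^ 2))
          + vr ^ 2 * ((c1 - 1) * ((m : ℝ) * (q1 : ℝ))) := add_le_add e1 e2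
      _ ≤ (∑ i, (w i - u) ^ 2)
          + vr ^ 2 * (((∑ i, nn i : ℕ) : ℝ) - (m : ℝ) * (q1 : ℝ)) := add_le_add hA hT
  -- Case B
  · push_neg at hcase
    have hfsV : frobSq V ≤ 4 * c2 ^ 2 * ((q1 : ℝ) * vr ^ 2) := by
      nlinarith [hsv2, hu2, hcase, hsvnn, hunn, hc2pos]
    set Q := (q1 : ℝ) * vr ^ 2 with hQdef
    have hQnn : 0 ≤ Q := mul_nonneg (Nat.cast_nonneg q1) (sq_nonneg vr)
    have hκhalf : μ / (8 * c2 ^ 2) ≤ (c1 - 1) / 2 := by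
      have h1 : μ / (8 * c2 ^ 2) ≤ μ / 2 := by
        apply div_le_div_of_nonneg_left hμpos.le two_pos (by nlinarith)
      exact h1.trans ((div_le_div_iff_of_pos_right two_pos).2 hμlec)
    have k1 : μ / (8 * c2 ^ 2) * ((m : ℝ) * frobSq V) ≤ (c1 - 1) * ((m:ℝ) * Q) / 2 := by
      have h1 : μ / (8 * c2 ^ 2) * ((m : ℝ) * frobSq V)
          ≤ μ / (8 * c2 ^ 2) * ((m : ℝ) * (4 * c2 ^ 2 * Q)) := by
        apply mul_le_mul_of_nonneg_left _ (by positivity)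
        exact mul_le_mul_of_nonneg_left hfsV (Nat.cast_nonneg m)
      have h2 : μ / (8 * c2 ^ 2) * ((m : ℝ) * (4 * c2 ^ 2 * Q)) = μ * ((m:ℝ) * Q) / 2 := by
        field_simp
        ring
      have h3 : μ * ((m:ℝ) * Q) / 2 ≤ (c1 - 1) * ((m:ℝ) * Q) / 2 :=
        (div_le_div_iff_of_pos_right two_pos).2
          (mul_le_mul_of_nonneg_right hμlec (mul_nonneg (Nat.cast_nonneg m) hQnn))
      calc μ / (8 * c2 ^ 2) * ((m : ℝ) * frobSq V)
          ≤ μ / (8 * c2 ^ 2) * ((m : ℝ) * (4 * c2 ^ 2 * Q)) := h1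
        _ = μ * ((m:ℝ) * Q) / 2 := h2
        _ ≤ (c1 - 1) * ((m:ℝ) * Q) / 2 := h3
    have k2 : μ / (8 * c2 ^ 2) * ((m : ℝ) * vr ^ 2) ≤ (c1 - 1) * ((m:ℝ) * Q) / 2 := by
      have h1 : μ / (8 * c2 ^ 2) * ((m : ℝ) * vr ^ 2) ≤ (c1 - 1) / 2 * ((m : ℝ) * vr ^ 2) :=
        mul_le_mul_of_nonneg_right hκhalf (by positivity)
      have h2 : (c1 - 1) / 2 * ((m : ℝ) * vr ^ 2) ≤ (c1 - 1) / 2 * ((m : ℝ) * Q) := by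
        apply mul_le_mul_of_nonneg_left _ (by linarith : (0:ℝ) ≤ (c1 - 1) / 2)
        apply mul_le_mul_of_nonneg_left _ (Nat.cast_nonneg m)
        rw [hQdef]
        exact le_mul_of_one_le_left (sq_nonneg vr) hq1R
      calc μ / (8 * c2 ^ 2) * ((m : ℝ) * vr ^ 2) ≤ (c1 - 1) / 2 * ((m : ℝ) * vr ^ 2) := h1
        _ ≤ (c1 - 1) / 2 * ((m : ℝ) * Q) := h2
        _ = (c1 - 1) * ((m:ℝ) * Q) / 2 := by ring
    calc μ / (8 * c2 ^ 2) * ((m : ℝ) * (frobSq V + vr ^ 2))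
        = μ / (8 * c2 ^ 2) * ((m : ℝ) * frobSq V)
          + μ / (8 * c2 ^ 2) * ((m : ℝ) * vr ^ 2) := by ring
      _ ≤ (c1 - 1) * ((m:ℝ) * Q) / 2 + (c1 - 1) * ((m:ℝ) * Q) / 2 := add_le_add k1 k2
      _ = vr ^ 2 * ((c1 - 1) * ((m : ℝ) * (q1 : ℝ))) := by rw [hQdef]; ring
      _ ≤ (∑ i, (w i - u) ^ 2)
          + vr ^ 2 * (((∑ i, nn i : ℕ) : ℝ) - (m : ℝ) * (q1 : ℝ)) := by
          linarith [hsq_nonneg, hT]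
end SHelp


namespace SHelp
set_option linter.unusedSectionVars false
set_option linter.unusedVariables false
set_option maxHeartbeats 1000000
set_option synthInstance.maxHeartbeats 1000000

lemma frob_le_sqrt2_vech {q1 : ℕ} (Ψ : Matrix (Fin q1) (Fin q1) ℝ) (hsym : Ψᵀ = Ψ) :
    frobNorm Ψ ≤ Real.sqrt 2 * vechNorm Ψ := by
  have happ : ∀ k l : Fin q1, Ψ l k = Ψ k l := by
    intro k l
    have h := congrFun (congrFun hsym l) k
    rw [Matrix.transpose_apply] at h
    exact h.symm
  set VS := ∑ k : Fin q1, ∑ l : Fin q1, if (l : ℕ) ≤ (k : ℕ) then Ψ k l ^ 2 else 0 with hVS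
  have hVSnn : 0 ≤ VS := by
    apply Finset.sum_nonneg; intro k _
    apply Finset.sum_nonneg; intro l _
    split <;> simp [sq_nonneg]
  have h2 : frobSq Ψ ≤ 2 * VS := by
    have hsplitterm : ∀ k l : Fin q1, Ψ k l ^ 2
        = (if (l:ℕ) ≤ (k:ℕ) then Ψ k l ^ 2 else 0)
          + (if (k:ℕ) < (l:ℕ) then Ψ k l ^ 2 else 0) := by
      intro k l
      by_cases h : (l:ℕ) ≤ (k:ℕ)
      · simp [h, not_lt.2 h]
      · simp [h, not_le.1 h]
    have hupper : (∑ k : Fin q1, ∑ l : Fin q1, if (k:ℕ) < (l:ℕ) then Ψ k l ^ 2 else 0) ≤ VS := by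
      rw [Finset.sum_comm]
      rw [hVS]
      apply Finset.sum_le_sum
      intro l _
      apply Finset.sum_le_sum
      intro k _
      by_cases h : (k:ℕ) < (l:ℕ)
      · rw [if_pos h, if_pos (le_of_lt h), happ]
      · rw [if_neg h]
        split <;> simp [sq_nonneg]
    calc frobSq Ψ = VS + ∑ k : Fin q1, ∑ l : Fin q1, (if (k:ℕ) < (l:ℕ) then Ψ k l ^ 2 else 0) := by
          rw [frobSq, hVS, ← Finset.sum_add_distrib]
          apply Finset.sum_congr rfl
          intro k _
          rw [← Finset.sum_add_distrib]
          exact Finset.sum_congr rfl fun l _ => hsplitterm k l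
      _ ≤ VS + VS := by linarith [hupper]
      _ = 2 * VS := by ring
  have hv : vechNorm Ψ = Real.sqrt VS := rfl
  calc frobNorm Ψ = Real.sqrt (frobSq Ψ) := rfl
    _ ≤ Real.sqrt (2 * VS) := Real.sqrt_le_sqrt h2
    _ = Real.sqrt 2 * vechNorm Ψ := by rw [Real.sqrt_mul (by norm_num : (0:ℝ) ≤ 2), hv]
end SHelp



open SHelp in
set_option maxHeartbeats 2000000 in
set_option synthInstance.maxHeartbeats 1000000 in
/-- Independent clusters: for all `c₁ > 1` and `c₂ ∈ (1,∞)` there is `c₃` depending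
only on `c₁, c₂` such that, under (i) `n̄/q₁ ≥ c₁` and (ii) all eigenvalues of
`Zᵢᵀ Zᵢ` in `[c₂⁻¹, c₂]` (expressed via Rayleigh quotients), for every PSD `Ψ₁`,
`ψ_r > 0` and every symmetric `V₁`, `v_r` not both zero,
`a(v, ψ) ≤ c₃ m^{−1/2} (1 + ‖vech(Ψ₁)‖/ψ_r)`. -/
theorem stmt15 (c1 c2 : ℝ) (hc1 : 1 < c1) (hc2 : 1 < c2) :
    ∃ c3 : ℝ, ∀ (m q1 : ℕ) (nn : Fin m → ℕ)
      (Z : ∀ i : Fin m, Matrix (Fin (nn i)) (Fin q1) ℝ),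
      1 ≤ m → 1 ≤ q1 → (∀ i, 1 ≤ nn i) →
      c1 ≤ ((∑ i, nn i : ℕ) : ℝ) / ((m : ℝ) * (q1 : ℝ)) →
      (∀ (i : Fin m) (x : Fin q1 → ℝ),
        c2⁻¹ * (∑ k, x k ^ 2) ≤ x ⬝ᵥ ((Z i)ᵀ * Z i) *ᵥ x ∧
        x ⬝ᵥ ((Z i)ᵀ * Z i) *ᵥ x ≤ c2 * (∑ k, x k ^ 2)) →
      ∀ (Ψ1 : Matrix (Fin q1) (Fin q1) ℝ), Ψ1.PosSemidef →
      ∀ ψr : ℝ, 0 < ψr →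
      ∀ (V1 : Matrix (Fin q1) (Fin q1) ℝ), V1.IsSymm →
      ∀ vr : ℝ, ¬(V1 = 0 ∧ vr = 0) →
        specNorm ((msqrt (SigmaClust nn Z Ψ1 ψr))⁻¹ * SigmaClust nn Z V1 vr *
              (msqrt (SigmaClust nn Z Ψ1 ψr))⁻¹) /
          frobNorm ((msqrt (SigmaClust nn Z Ψ1 ψr))⁻¹ * SigmaClust nn Z V1 vr *
              (msqrt (SigmaClust nn Z Ψ1 ψr))⁻¹)
        ≤ c3 * (Real.sqrt m)⁻¹ * (1 + vechNorm Ψ1 / ψr) := by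
  have hc2pos : (0:ℝ) < c2 := lt_trans one_pos hc2
  set κ := min (c1 - 1) 1 / (8 * c2 ^ 2) with hκdef
  have hκpos : 0 < κ := by
    apply div_pos (lt_min (by linarith) one_pos) (by positivity)
  refine ⟨(c2 + 1) * (Real.sqrt 2 * c2) / Real.sqrt κ, ?_⟩
  intro m q1 nn Z hm hq1 hnn hc1' hray Ψ1 hΨ ψr hψr V1 hV1 vr hnz
  have hmR : (1:ℝ) ≤ (m : ℝ) := by exact_mod_cast hm
  have hq1R : (1:ℝ) ≤ (q1 : ℝ) := by exact_mod_cast hq1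
  have hmq : (0:ℝ) < (m : ℝ) * (q1 : ℝ) := by nlinarith
  have hcnt : c1 * ((m : ℝ) * (q1 : ℝ)) ≤ ((∑ i, nn i : ℕ) : ℝ) := by
    rw [le_div_iff₀ hmq] at hc1'
    exact hc1'
  have hlow : ∀ (i : Fin m) (x : Fin q1 → ℝ),
      c2⁻¹ * enSq x ≤ x ⬝ᵥ ((Z i)ᵀ * Z i) *ᵥ x := fun i x => (hray i x).1
  have hup : ∀ (i : Fin m) (u : Fin q1 → ℝ),
      u ⬝ᵥ ((Z i)ᵀ * Z i) *ᵥ u ≤ c2 * enSq u := fun i u => (hray i u).2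
  have hψsym : Ψ1ᵀ = Ψ1 := by
    have h := hΨ.1
    rwa [Matrix.IsHermitian, Matrix.conjTranspose_eq_transpose_of_trivial] at h
  have hVt : V1ᵀ = V1 := hV1
  set S := SigmaClust nn Z Ψ1 ψr with hSdef
  have hSsymm : Sᵀ = S := SigmaClust_transpose Z Ψ1 ψr hψsym
  have hSherm : S.IsHermitian := by
    rw [Matrix.IsHermitian, Matrix.conjTranspose_eq_transpose_of_trivial]
    exact hSsymm
  have hSray : ∀ x, ψr * enSq x ≤ x ⬝ᵥ (S *ᵥ x) :=
    SigmaClust_rayleigh_lower Z Ψ1 hΨ ψr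
  have hSpsd : S.PosSemidef := by
    refine posSemidef_iff_dotProduct_mulVec.2 ⟨hSherm, fun x => ?_⟩
    rw [star_trivial]
    exact le_trans (mul_nonneg hψr.le (enSq_nonneg x)) (hSray x)
  have hSpd : S.PosDef := by
    refine posDef_iff_dotProduct_mulVec.2 ⟨hSherm, fun x hx => ?_⟩
    rw [star_trivial]
    exact lt_of_lt_of_le (mul_pos hψr (enSq_pos hx)) (hSray x)
  have hmsqrt : msqrt S = msqrt S := rfl
  set R := msqrt S with hRdef
  have hRR : R * R = S := (msqrt_props S hSpsd).1
  have hRsymm : Rᵀ = R := (msqrt_props S hSpsd).2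
  have hSdet : S.det ≠ 0 := hSpd.det_pos.ne'
  have hRdet : R.det ≠ 0 := by
    intro h
    exact hSdet (by rw [← hRR, Matrix.det_mul, h, mul_zero])
  have hSinv : S⁻¹ = R⁻¹ * R⁻¹ := by rw [← hRR, Matrix.mul_inv_rev]
  have hRinvsymm : (R⁻¹)ᵀ = R⁻¹ := by rw [Matrix.transpose_nonsing_inv, hRsymm]
  have hspecSinv : specNorm S⁻¹ ≤ ψr⁻¹ :=
    spec_inv_le S hψr (Matrix.mul_nonsing_inv _ (isUnit_iff_ne_zero.2 hSdet)) hSray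
  have hspecRinv : specNorm R⁻¹ ≤ Real.sqrt ψr⁻¹ := by
    apply spec_le_sqrt_of_eq R⁻¹ S⁻¹ _ (inv_nonneg.2 hψr.le) hspecSinv
    rw [hRinvsymm]; exact hSinv.symm
  have hspecR : specNorm R ≤ Real.sqrt (specNorm S) := by
    apply spec_le_sqrt_of_eq R S _ (specNorm_nonneg S) le_rfl
    rw [hRsymm]; exact hRR
  set Sv := SigmaClust nn Z V1 vr with hSvdef
  set B := R⁻¹ * Sv * R⁻¹ with hBdef
  set X := frobSq V1 + vr ^ 2 with hXdef
  have hXpos : 0 < X := by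
    rw [hXdef]
    by_cases hV0 : V1 = 0
    · have hvr : vr ≠ 0 := fun h => hnz ⟨hV0, h⟩
      have : 0 < vr ^ 2 := by positivity
      linarith [frobSq_nonneg V1]
    · have h1 : 0 < frobSq V1 := by
        rcases (frobSq_nonneg V1).eq_or_lt with h | h
        · exact absurd (frobSq_eq_zero_iff h.symm) hV0
        · exact h
      linarith [sq_nonneg vr]
  have hglobal : κ * ((m : ℝ) * X) ≤ frobSq Sv :=
    global_lower Z hc1 hc2 hq1 hm hcnt hlow V1 hVt vr
  have hspecSv : specNorm Sv ≤ c2 * frobNorm V1 + |vr| :=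
    spec_SigmaClust_le Z hc2pos hup V1 vr
  have hXsqrtpos : 0 < Real.sqrt X := Real.sqrt_pos.2 hXpos
  have hmpos : (0:ℝ) < (m:ℝ) := by linarith
  have hmsqrtpos : 0 < Real.sqrt m := Real.sqrt_pos.2 hmpos
  have hκsqrtpos : 0 < Real.sqrt κ := Real.sqrt_pos.2 hκpos
  set den := Real.sqrt κ * (Real.sqrt m * Real.sqrt X) with hdendef
  have hdenpos : 0 < den := by positivity
  have hfrobSv_lower : den ≤ frobNorm Sv := by
    have h1 : Real.sqrt (κ * ((m:ℝ) * X)) ≤ Real.sqrt (frobSq Sv) :=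
      Real.sqrt_le_sqrt hglobal
    rw [Real.sqrt_mul hκpos.le, Real.sqrt_mul (Nat.cast_nonneg m)] at h1
    exact h1
  -- upper bound on specNorm B
  have hstep3 : c2 * frobNorm V1 + |vr| ≤ (c2 + 1) * Real.sqrt X := by
    have h1 : frobNorm V1 ≤ Real.sqrt X := by
      rw [frobNorm_eq]
      apply Real.sqrt_le_sqrt
      rw [hXdef]; linarith [sq_nonneg vr]
    have h2 : |vr| ≤ Real.sqrt X := by
      rw [← Real.sqrt_sq_eq_abs]
      apply Real.sqrt_le_sqrt
      rw [hXdef]; linarith [frobSq_nonneg V1]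
    nlinarith [frobNorm_nonneg V1]
  have hinv2 : specNorm R⁻¹ * specNorm R⁻¹ ≤ ψr⁻¹ := by
    have h := mul_le_mul hspecRinv hspecRinv (specNorm_nonneg _) (Real.sqrt_nonneg _)
    rwa [Real.mul_self_sqrt (inv_nonneg.2 hψr.le)] at h
  have hB1 : specNorm B ≤ ψr⁻¹ * ((c2 + 1) * Real.sqrt X) := by
    calc specNorm B ≤ specNorm (R⁻¹ * Sv) * specNorm R⁻¹ := spec_mul_le _ _
      _ ≤ (specNorm R⁻¹ * specNorm Sv) * specNorm R⁻¹ :=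
          mul_le_mul_of_nonneg_right (spec_mul_le _ _) (specNorm_nonneg _)
      _ = (specNorm R⁻¹ * specNorm R⁻¹) * specNorm Sv := by ring
      _ ≤ ψr⁻¹ * specNorm Sv := mul_le_mul_of_nonneg_right hinv2 (specNorm_nonneg _)
      _ ≤ ψr⁻¹ * (c2 * frobNorm V1 + |vr|) :=
          mul_le_mul_of_nonneg_left hspecSv (inv_nonneg.2 hψr.le)
      _ ≤ ψr⁻¹ * ((c2 + 1) * Real.sqrt X) :=
          mul_le_mul_of_nonneg_left hstep3 (inv_nonneg.2 hψr.le)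
  -- lower bound relating frobNorm B
  have hRR2 : specNorm R * specNorm R ≤ specNorm S := by
    have h := mul_le_mul hspecR hspecR (specNorm_nonneg _) (Real.sqrt_nonneg _)
    rwa [Real.mul_self_sqrt (specNorm_nonneg S)] at h
  have hBRR : R * ((R⁻¹ * Sv * R⁻¹) * R) = Sv := by
    have h1 : R * ((R⁻¹ * Sv * R⁻¹) * R) = (R * R⁻¹) * (Sv * (R⁻¹ * R)) := by
      simp only [Matrix.mul_assoc]
    rw [h1, Matrix.mul_nonsing_inv _ (isUnit_iff_ne_zero.2 hRdet),
      Matrix.nonsing_inv_mul _ (isUnit_iff_ne_zero.2 hRdet), Matrix.one_mul,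
      Matrix.mul_one]
  have hLo : frobNorm Sv ≤ specNorm S * frobNorm B := by
    calc frobNorm Sv = frobNorm (R * ((R⁻¹ * Sv * R⁻¹) * R)) := by rw [hBRR]
      _ ≤ specNorm R * frobNorm ((R⁻¹ * Sv * R⁻¹) * R) := frob_mul_le_left _ _
      _ ≤ specNorm R * (frobNorm (R⁻¹ * Sv * R⁻¹) * specNorm R) :=
          mul_le_mul_of_nonneg_left (frob_mul_le_right _ _) (specNorm_nonneg R)
      _ = (specNorm R * specNorm R) * frobNorm B := by rw [hBdef]; ring
      _ ≤ specNorm S * frobNorm B := mul_le_mul_of_nonneg_right hRR2 (frobNorm_nonneg _)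
  -- upper bound on specNorm S
  have hsqrt2ge1 : (1:ℝ) ≤ Real.sqrt 2 := by
    have h : Real.sqrt 1 ≤ Real.sqrt 2 := Real.sqrt_le_sqrt (by norm_num)
    rwa [Real.sqrt_one] at h
  set D := 1 + vechNorm Ψ1 / ψr with hDdef
  have hvechnn : 0 ≤ vechNorm Ψ1 := Real.sqrt_nonneg _
  have hDge1 : 1 ≤ D := by
    rw [hDdef]
    have : 0 ≤ vechNorm Ψ1 / ψr := div_nonneg hvechnn hψr.le
    linarith
  have hS1 : specNorm S ≤ Real.sqrt 2 * c2 * (ψr * D) := by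
    have h0 : specNorm S ≤ c2 * frobNorm Ψ1 + |ψr| :=
      spec_SigmaClust_le Z hc2pos hup Ψ1 ψr
    rw [abs_of_pos hψr] at h0
    have h1 : frobNorm Ψ1 ≤ Real.sqrt 2 * vechNorm Ψ1 := frob_le_sqrt2_vech Ψ1 hψsym
    have h2 : ψr * D = ψr + vechNorm Ψ1 := by
      rw [hDdef]
      field_simp
    rw [h2]
    have h3 : (1:ℝ) ≤ Real.sqrt 2 * c2 := by nlinarith
    nlinarith [mul_le_mul_of_nonneg_left h1 hc2pos.le, h3, hψr, hvechnn]
  -- positivity of frobNorm B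
  have hprod : den ≤ specNorm S * frobNorm B := le_trans hfrobSv_lower hLo
  have hfrobBpos : 0 < frobNorm B := by
    rcases (frobNorm_nonneg B).eq_or_lt with h | h
    · exfalso
      rw [← h, mul_zero] at hprod
      linarith
    · exact h
  -- final chain
  have step1 : specNorm B / frobNorm B ≤ specNorm B * specNorm S / den := by
    rw [div_le_div_iff₀ hfrobBpos hdenpos]
    calc specNorm B * den ≤ specNorm B * (specNorm S * frobNorm B) :=
          mul_le_mul_of_nonneg_left hprod (specNorm_nonneg B)
      _ = specNorm B * specNorm S / 1 * frobNorm B := by ring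
      _ = specNorm B * specNorm S * frobNorm B := by ring
  have hnum1nn : (0:ℝ) ≤ ψr⁻¹ * ((c2 + 1) * Real.sqrt X) := by positivity
  have step2 : specNorm B * specNorm S / den
      ≤ (ψr⁻¹ * ((c2 + 1) * Real.sqrt X)) * (Real.sqrt 2 * c2 * (ψr * D)) / den := by
    apply div_le_div₀ (by positivity) _ hdenpos le_rfl
    exact mul_le_mul hB1 hS1 (specNorm_nonneg S) hnum1nn
  have hfinal : (ψr⁻¹ * ((c2 + 1) * Real.sqrt X)) * (Real.sqrt 2 * c2 * (ψr * D)) / den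
      = (c2 + 1) * (Real.sqrt 2 * c2) / Real.sqrt κ * (Real.sqrt m)⁻¹ * D := by
    rw [hdendef]
    field_simp
  calc specNorm B / frobNorm B ≤ specNorm B * specNorm S / den := step1
    _ ≤ (ψr⁻¹ * ((c2 + 1) * Real.sqrt X)) * (Real.sqrt 2 * c2 * (ψr * D)) / den := step2
    _ = (c2 + 1) * (Real.sqrt 2 * c2) / Real.sqrt κ * (Real.sqrt m)⁻¹ * D := hfinal
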